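/- Let A be a real symmetric n×n matrix with spectral decomposition A = Q Λ Qᵀ where Q is orthogonal and Λ = diag(λ₁,…,λₙ). Then the matrix Q Λ₊ Qᵀ, where Λ₊ = diag(max(λ₁,0),…,max(λₙ,0)), is the unique minimizer over the set of symmetric positive semidefinite matrices Y of the Frobenius norm ‖A − Y‖_F. -/

import Mathlib

open scoped Matrix

attribute [local instance] Matrix.frobeniusNormedAddCommGroup

section aux
variable {n : ℕ}

/-- squared sum of entries -/
noncomputable def S (M : Matrix (Fin n) (Fin n) ℝ) : ℝ := ∑ i, ∑ j, (M i j)^2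

lemma norm_eq_sqrt_S (M : Matrix (Fin n) (Fin n) ℝ) : ‖M‖ = Real.sqrt (S M) := by
  rw [Matrix.frobenius_norm_def, Real.sqrt_eq_rpow, S]
  congr 1
  refine Finset.sum_congr rfl fun i _ => Finset.sum_congr rfl fun j _ => ?_
  rw [Real.norm_eq_abs, Real.rpow_two, sq_abs]

lemma S_eq_trace (M : Matrix (Fin n) (Fin n) ℝ) : S M = Matrix.trace (Mᵀ * M) := by
  simp only [S, Matrix.trace, Matrix.diag, Matrix.mul_apply, Matrix.transpose_apply, sq]
  rw [Finset.sum_comm]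

lemma S_conj (Q M : Matrix (Fin n) (Fin n) ℝ) (hQ : Qᵀ * Q = 1) :
    S (Q * M * Qᵀ) = S M := by
  rw [S_eq_trace, S_eq_trace]
  have : (Q * M * Qᵀ)ᵀ * (Q * M * Qᵀ) = Q * (Mᵀ * M) * Qᵀ := by
    simp only [Matrix.transpose_mul, Matrix.transpose_transpose, Matrix.mul_assoc]
    rw [show Qᵀ * (Q * (M * Qᵀ)) = M * Qᵀ by rw [← Matrix.mul_assoc, hQ, Matrix.one_mul]]
  rw [this, Matrix.trace_mul_comm, ← Matrix.mul_assoc, hQ, Matrix.one_mul]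

lemma psd_diag_nonneg {Z : Matrix (Fin n) (Fin n) ℝ} (hZ : Z.PosSemidef) (i : Fin n) :
    0 ≤ Z i i := by
  exact hZ.diag_nonneg

end aux

/-- Eigenvalue clipping gives the unique Frobenius-norm projection of a symmetric
matrix onto the PSD cone. -/
theorem psd_projection_unique_minimizer {n : ℕ}
    (A Q : Matrix (Fin n) (Fin n) ℝ) (lam : Fin n → ℝ)
    (hA : Aᵀ = A)
    (hQ : Qᵀ * Q = 1)
    (hdecomp : A = Q * Matrix.diagonal lam * Qᵀ) :
    (Q * Matrix.diagonal (fun i => max (lam i) 0) * Qᵀ).PosSemidef ∧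
    (∀ Y : Matrix (Fin n) (Fin n) ℝ, Y.PosSemidef →
      ‖A - Q * Matrix.diagonal (fun i => max (lam i) 0) * Qᵀ‖ ≤ ‖A - Y‖) ∧
    (∀ Y : Matrix (Fin n) (Fin n) ℝ, Y.PosSemidef →
      Y ≠ Q * Matrix.diagonal (fun i => max (lam i) 0) * Qᵀ →
      ‖A - Q * Matrix.diagonal (fun i => max (lam i) 0) * Qᵀ‖ < ‖A - Y‖) := by
  have hQQt : Q * Qᵀ = 1 := mul_eq_one_comm.mp hQ
  set D : Matrix (Fin n) (Fin n) ℝ := Matrix.diagonal lam with hD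
  set P : Matrix (Fin n) (Fin n) ℝ := Matrix.diagonal (fun i => max (lam i) 0) with hP
  -- PSD of projection
  have hPpsd : (Q * P * Qᵀ).PosSemidef := by
    have : P.PosSemidef := Matrix.PosSemidef.diagonal (fun i => le_max_right _ _)
    have h2 := this.mul_mul_conjTranspose_same Q
    simpa using h2
  -- key diagonal comparison
  have key : ∀ Z : Matrix (Fin n) (Fin n) ℝ, Z.PosSemidef →
      (S (D - P) ≤ S (D - Z)) ∧ (Z ≠ P → S (D - P) < S (D - Z)) := by
    intro Z hZ
    have hptwise : ∀ p : Fin n × Fin n, ((D - P) p.1 p.2)^2 ≤ ((D - Z) p.1 p.2)^2 := by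
      rintro ⟨i, j⟩
      by_cases hij : i = j
      · subst hij
        have hz : 0 ≤ Z i i := psd_diag_nonneg hZ i
        simp only [Matrix.sub_apply, hD, hP, Matrix.diagonal_apply_eq]
        rcases le_or_gt 0 (lam i) with h | h
        · rw [max_eq_left h]; nlinarith
        · rw [max_eq_right h.le]; nlinarith
      · simp only [Matrix.sub_apply, hD, hP, Matrix.diagonal_apply_ne _ hij]
        nlinarith [sq_nonneg (Z i j)]
    have hSprod : ∀ M : Matrix (Fin n) (Fin n) ℝ,
        S M = ∑ p : Fin n × Fin n, (M p.1 p.2)^2 := fun M =>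
      (Fintype.sum_prod_type (f := fun p : Fin n × Fin n => (M p.1 p.2)^2)).symm
    have hsum : S (D - P) ≤ S (D - Z) := by
      rw [hSprod, hSprod]
      exact Finset.sum_le_sum fun p _ => hptwise p
    refine ⟨hsum, fun hne => ?_⟩
    obtain ⟨i, j, hij⟩ : ∃ i j, Z i j ≠ P i j := by
      by_contra h
      push_neg at h
      exact hne (by ext i j; exact h i j)
    have hstrict : ((D - P) i j)^2 < ((D - Z) i j)^2 := by
      by_cases hij' : i = j
      · subst hij'
        have hz : 0 ≤ Z i i := psd_diag_nonneg hZ i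
        simp only [hP, Matrix.diagonal_apply_eq] at hij
        simp only [Matrix.sub_apply, hD, hP, Matrix.diagonal_apply_eq]
        rcases le_or_gt 0 (lam i) with h | h
        · rw [max_eq_left h] at hij ⊢
          have hne0 : lam i - Z i i ≠ 0 := by
            intro hc; exact hij (by linarith)
          nlinarith [sq_pos_of_ne_zero hne0]
        · rw [max_eq_right h.le] at hij ⊢
          have hzpos : 0 < Z i i := lt_of_le_of_ne hz (Ne.symm hij)
          nlinarith
      · simp only [hP, Matrix.diagonal_apply_ne _ hij'] at hij
        simp only [Matrix.sub_apply, hD, hP, Matrix.diagonal_apply_ne _ hij']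
        have : 0 < (Z i j)^2 := by positivity
        nlinarith
    rw [hSprod, hSprod]
    exact Finset.sum_lt_sum (fun p _ => hptwise p) ⟨(i, j), Finset.mem_univ _, hstrict⟩
  -- transfer via conjugation
  have hAmY : ∀ Y : Matrix (Fin n) (Fin n) ℝ,
      A - Y = Q * (D - Qᵀ * Y * Q) * Qᵀ := by
    intro Y
    have : Q * (Qᵀ * Y * Q) * Qᵀ = Y := by
      calc Q * (Qᵀ * Y * Q) * Qᵀ = (Q * Qᵀ) * Y * (Q * Qᵀ) := by noncomm_ring
        _ = Y := by rw [hQQt, Matrix.one_mul, Matrix.mul_one]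
    rw [Matrix.mul_sub, Matrix.sub_mul, this, ← hdecomp]
  have hZpsd : ∀ Y : Matrix (Fin n) (Fin n) ℝ, Y.PosSemidef → (Qᵀ * Y * Q).PosSemidef := by
    intro Y hY
    have := hY.conjTranspose_mul_mul_same Q
    simpa using this
  have hnorm : ∀ Y : Matrix (Fin n) (Fin n) ℝ, ‖A - Y‖ = Real.sqrt (S (D - Qᵀ * Y * Q)) := by
    intro Y
    rw [hAmY Y, norm_eq_sqrt_S, S_conj _ _ hQ]
  have hprojnorm : ‖A - Q * P * Qᵀ‖ = Real.sqrt (S (D - P)) := by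
    have : Qᵀ * (Q * P * Qᵀ) * Q = P := by
      calc Qᵀ * (Q * P * Qᵀ) * Q = (Qᵀ * Q) * P * (Qᵀ * Q) := by noncomm_ring
        _ = P := by rw [hQ, Matrix.one_mul, Matrix.mul_one]
    rw [hnorm, this]
  refine ⟨hPpsd, fun Y hY => ?_, fun Y hY hne => ?_⟩
  · rw [hprojnorm, hnorm Y]
    exact Real.sqrt_le_sqrt (key _ (hZpsd Y hY)).1
  · rw [hprojnorm, hnorm Y]
    have hZne : Qᵀ * Y * Q ≠ P := by
      intro hc
      apply hne
      have : Q * (Qᵀ * Y * Q) * Qᵀ = Y := by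
        calc Q * (Qᵀ * Y * Q) * Qᵀ = (Q * Qᵀ) * Y * (Q * Qᵀ) := by noncomm_ring
          _ = Y := by rw [hQQt, Matrix.one_mul, Matrix.mul_one]
      rw [← this, hc]
    have h1 := (key _ (hZpsd Y hY)).2 hZne
    have h0 : 0 ≤ S (D - P) := by
      rw [S]; positivity
    exact Real.sqrt_lt_sqrt h0 h1
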